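/- arXiv:math/9504210 — 4 statements merged into one kernel-verified Lean document; each statement's English description precedes it below -/
import Mathlib

section
/- If f and g are polynomial maps on ℂ that commute under composition (f ∘ g = g ∘ f), then g maps the filled Julia set of f into itself, i.e. g(K_f) ⊆ K_f, where K_f is the set of points z whose forward orbit {f^[i](z)} is bounded. -/
theorem stmt_0 (f g : Polynomial ℂ)
    (hcomm : ∀ z : ℂ, f.eval (g.eval z) = g.eval (f.eval z)) :
    (fun z : ℂ => g.eval z) ''
        {z : ℂ | Bornology.IsBounded (Set.range (fun i => (fun w : ℂ => f.eval w)^[i] z))} ⊆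
      {z : ℂ | Bornology.IsBounded (Set.range (fun i => (fun w : ℂ => f.eval w)^[i] z))} := by
  rintro _ ⟨z, hz, rfl⟩
  simp only [Set.mem_setOf_eq] at hz ⊢
  have key : ∀ i : ℕ, (fun w : ℂ => f.eval w)^[i] (g.eval z)
      = g.eval ((fun w : ℂ => f.eval w)^[i] z) := by
    intro i
    induction i with
    | zero => rfl
    | succ n ih =>
      rw [Function.iterate_succ_apply', Function.iterate_succ_apply', ih, hcomm]
  have hsub : Set.range (fun i => (fun w : ℂ => f.eval w)^[i] (g.eval z)) ⊆
      (fun w : ℂ => g.eval w) '' Set.range (fun i => (fun w : ℂ => f.eval w)^[i] z) := by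
    rintro _ ⟨i, rfl⟩
    exact ⟨_, ⟨i, rfl⟩, (key i).symm⟩
  have hcomp : IsCompact ((fun w : ℂ => g.eval w) ''
      closure (Set.range (fun i => (fun w : ℂ => f.eval w)^[i] z))) :=
    (hz.isCompact_closure).image (Polynomial.continuous g)
  exact hcomp.isBounded.subset (hsub.trans (Set.image_mono subset_closure))
end

section
/- If f and g are polynomials of degree at least 2 that commute under composition, then they have the same filled Julia set: K_f = K_g, where the filled Julia set is the set of points with bounded forward orbit. -/
open Polynomial Filter Bornology Set

lemma escape_radius (f : Polynomial ℂ) (hf : 2 ≤ f.natDegree) :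
    ∃ R : ℝ, 0 < R ∧ ∀ z : ℂ, R ≤ ‖z‖ → 2 * ‖z‖ ≤ ‖f.eval z‖ := by
  set q := f /ₘ Polynomial.X with hqdef
  have hqdeg : 0 < q.degree := by
    have h1 : q.natDegree = f.natDegree - 1 := by
      rw [hqdef, Polynomial.natDegree_divByMonic f Polynomial.monic_X, Polynomial.natDegree_X]
    exact Polynomial.natDegree_pos_iff_degree_pos.mp (by omega)
  have ht : Tendsto (fun z : ℂ => ‖q.eval z‖) (cobounded ℂ) atTop :=
    q.tendsto_norm_atTop hqdeg tendsto_norm_cobounded_atTop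
  have hev : ∀ᶠ z : ℂ in cobounded ℂ, 3 ≤ ‖q.eval z‖ := ht.eventually_ge_atTop 3
  rw [← comap_norm_atTop, eventually_comap] at hev
  rw [eventually_atTop] at hev
  obtain ⟨a, ha⟩ := hev
  refine ⟨max a (max 1 ‖f.eval 0‖), lt_of_lt_of_le one_pos (le_max_of_le_right (le_max_left _ _)),
    fun z hz => ?_⟩
  have h3 : 3 ≤ ‖q.eval z‖ := ha ‖z‖ (le_trans (le_max_left _ _) hz) z rfl
  have hfz : f.eval z = f.eval 0 + z * q.eval z := by
    conv_lhs => rw [← f.modByMonic_add_div Polynomial.X]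
    rw [Polynomial.modByMonic_X]
    simp [hqdef]
  have h0 : ‖f.eval 0‖ ≤ ‖z‖ := le_trans (le_trans (le_max_right _ _) (le_max_right _ _)) hz
  have : ‖z * q.eval z‖ - ‖f.eval 0‖ ≤ ‖f.eval z‖ := by
    rw [hfz]
    calc ‖z * q.eval z‖ - ‖f.eval 0‖ = ‖z * q.eval z‖ - ‖-(f.eval 0)‖ := by rw [norm_neg]
    _ ≤ ‖z * q.eval z - -(f.eval 0)‖ := norm_sub_norm_le _ _
    _ = ‖f.eval 0 + z * q.eval z‖ := by rw [sub_neg_eq_add, add_comm]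
  rw [norm_mul] at this
  nlinarith [norm_nonneg z]

lemma mem_K_norm_le (f : Polynomial ℂ) {R : ℝ} (hR : 0 < R)
    (hesc : ∀ z : ℂ, R ≤ ‖z‖ → 2 * ‖z‖ ≤ ‖f.eval z‖) (z : ℂ)
    (hz : Bornology.IsBounded (Set.range (fun i => (fun w : ℂ => f.eval w)^[i] z))) :
    ‖z‖ ≤ R := by
  by_contra h
  push_neg at h
  have hzR : R ≤ ‖z‖ := le_of_lt h
  have key : ∀ n, 2 ^ n * ‖z‖ ≤ ‖(fun w : ℂ => f.eval w)^[n] z‖ := by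
    intro n
    induction n with
    | zero => simp
    | succ n ih =>
      have hR' : R ≤ ‖(fun w : ℂ => f.eval w)^[n] z‖ := by
        calc R ≤ ‖z‖ := hzR
        _ ≤ 2 ^ n * ‖z‖ := by nlinarith [norm_nonneg z, one_le_pow₀ (one_le_two (α := ℝ)) (n := n)]
        _ ≤ _ := ih
      rw [Function.iterate_succ_apply']
      have := hesc _ hR'
      calc 2 ^ (n+1) * ‖z‖ = 2 * (2 ^ n * ‖z‖) := by ring
      _ ≤ 2 * ‖(fun w : ℂ => f.eval w)^[n] z‖ := by linarith
      _ ≤ _ := this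
  obtain ⟨C, hC⟩ := isBounded_iff_forall_norm_le.mp hz
  have hCn : ∀ n : ℕ, 2 ^ n * ‖z‖ ≤ C := fun n =>
    le_trans (key n) (hC _ (Set.mem_range_self n))
  obtain ⟨n, hn⟩ := pow_unbounded_of_one_lt (C / ‖z‖) (one_lt_two (α := ℝ))
  have hzpos : 0 < ‖z‖ := lt_of_lt_of_le hR hzR
  have : C < 2 ^ n * ‖z‖ := by
    rw [div_lt_iff₀ hzpos] at hn; linarith
  linarith [hCn n]

lemma K_subset (f g : Polynomial ℂ)
    (hf : 2 ≤ f.natDegree)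
    (hcomm : ∀ z : ℂ, f.eval (g.eval z) = g.eval (f.eval z)) :
    {z : ℂ | Bornology.IsBounded (Set.range (fun i => (fun w : ℂ => f.eval w)^[i] z))} ⊆
      {z : ℂ | Bornology.IsBounded (Set.range (fun i => (fun w : ℂ => g.eval w)^[i] z))} := by
  obtain ⟨R, hR, hesc⟩ := escape_radius f hf
  intro z hz
  have step : ∀ w : ℂ,
      Bornology.IsBounded (Set.range (fun i => (fun w : ℂ => f.eval w)^[i] w)) →
      Bornology.IsBounded (Set.range (fun i => (fun w : ℂ => f.eval w)^[i] (g.eval w))) := by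
    intro w hw
    have hiter : ∀ n, (fun w : ℂ => f.eval w)^[n] (g.eval w)
        = g.eval ((fun w : ℂ => f.eval w)^[n] w) := by
      intro n
      induction n with
      | zero => rfl
      | succ n ih =>
        rw [Function.iterate_succ_apply', ih, Function.iterate_succ_apply', hcomm]
    have himg : Set.range (fun i => (fun w : ℂ => f.eval w)^[i] (g.eval w))
        ⊆ (fun x : ℂ => g.eval x) '' Set.range (fun i => (fun w : ℂ => f.eval w)^[i] w) := by
      rintro _ ⟨n, rfl⟩
      exact ⟨_, Set.mem_range_self n, (hiter n).symm⟩
    obtain ⟨C, hC⟩ := isBounded_iff_forall_norm_le.mp hw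
    have hsub : Set.range (fun i => (fun w : ℂ => f.eval w)^[i] w) ⊆ Metric.closedBall 0 C := by
      intro x hx; simpa [Metric.mem_closedBall] using hC x hx
    have hcpt : IsCompact ((fun x : ℂ => g.eval x) '' Metric.closedBall 0 C) :=
      (isCompact_closedBall (0:ℂ) C).image g.continuous
    exact hcpt.isBounded.subset (le_trans himg (Set.image_mono hsub))
  have horb : ∀ n : ℕ,
      Bornology.IsBounded (Set.range (fun i => (fun w : ℂ => f.eval w)^[i]
        ((fun w : ℂ => g.eval w)^[n] z))) := by
    intro n
    induction n with
    | zero => exact hz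
    | succ n ih =>
      rw [Function.iterate_succ_apply']
      exact step _ ih
  have : Set.range (fun i => (fun w : ℂ => g.eval w)^[i] z) ⊆ Metric.closedBall 0 R := by
    rintro _ ⟨n, rfl⟩
    simpa [Metric.mem_closedBall] using mem_K_norm_le f hR hesc _ (horb n)
  exact (Metric.isBounded_closedBall).subset this

theorem stmt_1 (f g : Polynomial ℂ)
    (hf : 2 ≤ f.natDegree) (hg : 2 ≤ g.natDegree)
    (hcomm : ∀ z : ℂ, f.eval (g.eval z) = g.eval (f.eval z)) :
    {z : ℂ | Bornology.IsBounded (Set.range (fun i => (fun w : ℂ => f.eval w)^[i] z))} =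
      {z : ℂ | Bornology.IsBounded (Set.range (fun i => (fun w : ℂ => g.eval w)^[i] z))} := by
  exact Set.Subset.antisymm (K_subset f g hf hcomm)
    (K_subset g f hg (fun z => (hcomm z).symm))
end

section
/- If σ is a complex number with |σ| = 1 and f is a polynomial of degree n satisfying f(σz) = σⁿ f(z) for all z, then multiplication by σ maps the filled Julia set K_f of f onto itself: σ·K_f = K_f. -/
theorem stmt_12 (f : Polynomial ℂ) (n : ℕ) (hn : f.natDegree = n) (hn2 : 2 ≤ n)
    (σ : ℂ) (hσ : ‖σ‖ = 1)
    (hsym : ∀ z : ℂ, f.eval (σ * z) = σ ^ n * f.eval z) :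
    (fun z => σ * z) ''
        {z : ℂ | Bornology.IsBounded (Set.range (fun i => (fun w : ℂ => f.eval w)^[i] z))} =
      {z : ℂ | Bornology.IsBounded (Set.range (fun i => (fun w : ℂ => f.eval w)^[i] z))} := by
  have hσ0 : σ ≠ 0 := by
    intro h
    simp [h] at hσ
  have hsym_pow : ∀ (k : ℕ) (z : ℂ), f.eval (σ ^ k * z) = σ ^ (k * n) * f.eval z := by
    intro k
    induction k with
    | zero => intro z; simp
    | succ k ih =>
      intro z
      have : σ ^ (k + 1) * z = σ * (σ ^ k * z) := by ring
      rw [this, hsym, ih, ← mul_assoc, ← pow_add, add_one_mul, add_comm]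
  have key : ∀ (i : ℕ) (z : ℂ),
      (fun w : ℂ => f.eval w)^[i] (σ * z) = σ ^ (n ^ i) * (fun w : ℂ => f.eval w)^[i] z := by
    intro i
    induction i with
    | zero => intro z; simp
    | succ i ih =>
      intro z
      rw [Function.iterate_succ_apply', Function.iterate_succ_apply', ih]
      rw [hsym_pow, pow_succ, mul_comm (n ^ i) n]
  have hnorm : ∀ (i : ℕ) (z : ℂ),
      ‖(fun w : ℂ => f.eval w)^[i] (σ * z)‖ = ‖(fun w : ℂ => f.eval w)^[i] z‖ := by
    intro i z
    rw [key, norm_mul, norm_pow]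
    have : ‖σ‖ = 1 := hσ
    simp [this]
  have hmem : ∀ z : ℂ,
      Bornology.IsBounded (Set.range (fun i => (fun w : ℂ => f.eval w)^[i] (σ * z))) ↔
      Bornology.IsBounded (Set.range (fun i => (fun w : ℂ => f.eval w)^[i] z)) := by
    intro z
    rw [isBounded_iff_forall_norm_le, isBounded_iff_forall_norm_le]
    constructor
    · rintro ⟨C, hC⟩
      refine ⟨C, ?_⟩
      rintro x ⟨i, rfl⟩
      rw [← hnorm i z]
      exact hC _ ⟨i, rfl⟩
    · rintro ⟨C, hC⟩
      refine ⟨C, ?_⟩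
      rintro x ⟨i, rfl⟩
      rw [hnorm i z]
      exact hC _ ⟨i, rfl⟩
  ext w
  simp only [Set.mem_image, Set.mem_setOf_eq]
  constructor
  · rintro ⟨z, hz, rfl⟩
    exact (hmem z).mpr hz
  · intro hw
    refine ⟨σ⁻¹ * w, ?_, by field_simp⟩
    have := (hmem (σ⁻¹ * w))
    rw [show σ * (σ⁻¹ * w) = w by field_simp] at this
    exact this.mp hw
end

section
/- If n and m are integers ≥ 2 with n^ν = m^μ for positive integers ν, μ, then there exist a positive integer r ≥ 2 and positive integers s, S with n = r^s and m = r^S. -/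
lemma aux_pow_of_dvd_factorization (n b : ℕ) (hn : n ≠ 0) (hb : b ≠ 0)
    (hdvd : ∀ p, b ∣ n.factorization p) : ∃ r : ℕ, n = r ^ b := by
  refine ⟨n.factorization.prod fun p k => p ^ (k / b), ?_⟩
  rw [Finsupp.prod, ← Finset.prod_pow]
  conv_lhs => rw [← Nat.factorization_prod_pow_eq_self hn]
  rw [Finsupp.prod]
  refine Finset.prod_congr rfl fun p hp => ?_
  rw [← pow_mul, Nat.div_mul_cancel (hdvd p)]

theorem stmt_17 (n m ν μ : ℕ) (hn : 2 ≤ n) (hm : 2 ≤ m) (hν : 1 ≤ ν) (hμ : 1 ≤ μ)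
    (h : n ^ ν = m ^ μ) :
    ∃ r s S : ℕ, 2 ≤ r ∧ 1 ≤ s ∧ 1 ≤ S ∧ n = r ^ s ∧ m = r ^ S := by
  set g := Nat.gcd ν μ with hg
  have hg1 : 1 ≤ g := Nat.le_of_dvd hν (Nat.gcd_dvd_left ν μ) |>.trans_eq' rfl |> fun _ => Nat.one_le_iff_ne_zero.mpr (Nat.gcd_ne_zero_left (by omega))
  set a := ν / g with ha
  set b := μ / g with hb
  have hag : a * g = ν := Nat.div_mul_cancel (Nat.gcd_dvd_left ν μ)
  have hbg : b * g = μ := Nat.div_mul_cancel (Nat.gcd_dvd_right ν μ)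
  have ha1 : 1 ≤ a := Nat.div_pos (Nat.le_of_dvd (by omega) (Nat.gcd_dvd_left ν μ)) (by omega)
  have hb1 : 1 ≤ b := Nat.div_pos (Nat.le_of_dvd (by omega) (Nat.gcd_dvd_right ν μ)) (by omega)
  have hcop : Nat.Coprime a b := Nat.coprime_div_gcd_div_gcd (by omega)
  have hkey : n ^ a = m ^ b := by
    have : (n ^ a) ^ g = (m ^ b) ^ g := by
      rw [← pow_mul, ← pow_mul, hag, hbg, h]
    exact Nat.pow_left_injective (by omega) this
  have hn0 : n ≠ 0 := by omega
  have hm0 : m ≠ 0 := by omega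
  have hdvd : ∀ p, b ∣ n.factorization p := by
    intro p
    have hf : a * n.factorization p = b * m.factorization p := by
      have := congrArg (fun x => Nat.factorization x p) hkey
      simpa [Nat.factorization_pow] using this
    have : b ∣ a * n.factorization p := ⟨m.factorization p, hf⟩
    exact (Nat.Coprime.dvd_of_dvd_mul_left (Nat.Coprime.symm hcop) this)
  obtain ⟨r, hr⟩ := aux_pow_of_dvd_factorization n b hn0 (by omega) hdvd
  have hr2 : 2 ≤ r := by
    by_contra hlt
    interval_cases r
    · rw [zero_pow (by omega)] at hr; omega
    · rw [one_pow] at hr; omega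
  have hmr : m = r ^ a := by
    have : m ^ b = (r ^ a) ^ b := by
      rw [← hkey, hr, ← pow_mul, ← pow_mul, mul_comm]
    exact Nat.pow_left_injective (by omega) this
  exact ⟨r, b, a, hr2, hb1, ha1, hr, hmr⟩
end
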